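/- Let V be a real inner product space and let a, b ∈ V with b ≠ 0. For t ≥ 0 define x(t) := e^{−t} a + (1 − e^{−t}) b. If x(t) ≠ 0 for all t in an interval [t₀, t₁] ⊆ [0, ∞), then the function t ↦ ⟨x(t), b⟩ / (‖x(t)‖ · ‖b‖) is monotone nondecreasing on [t₀, t₁]; its derivative equals (‖b‖² ‖x(t)‖² − ⟨x(t), b⟩²) / (‖x(t)‖³ ‖b‖), which is nonnegative by the Cauchy–Schwarz inequality. -/

import Mathlib

open scoped RealInnerProductSpace

/-- The solution `x(t) = e⁻ᵗ a + (1 - e⁻ᵗ) b` of the attracting dynamics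
`ẋ = -(x - b)` with `x(0) = a`. -/
noncomputable def interp {V : Type*} [AddCommGroup V] [Module ℝ V]
    (a b : V) (t : ℝ) : V :=
  Real.exp (-t) • a + (1 - Real.exp (-t)) • b

section aux

variable {V : Type*} [NormedAddCommGroup V] [InnerProductSpace ℝ V]

lemma interp_hasDerivAt (a b : V) (t : ℝ) :
    HasDerivAt (interp a b) (b - interp a b t) t := by
  have he : HasDerivAt (fun s : ℝ => Real.exp (-s)) (-Real.exp (-t)) t := by
    simpa using ((hasDerivAt_id t).neg).exp
  have h1 : HasDerivAt (fun s : ℝ => Real.exp (-s) • a) ((-Real.exp (-t)) • a) t :=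
    he.smul_const a
  have h2 : HasDerivAt (fun s : ℝ => (1 - Real.exp (-s)) • b)
      ((Real.exp (-t)) • b) t := by
    have := ((hasDerivAt_const t (1:ℝ)).sub he).smul_const b
    simpa using this
  have := h1.add h2
  have hval : (-Real.exp (-t)) • a + Real.exp (-t) • b = b - interp a b t := by
    simp [interp, sub_smul, one_smul, neg_smul]
    abel
  rw [hval] at this
  exact this

/-- derivative of the cosine at any point where `x t ≠ 0`. -/
lemma cos_hasDerivAt (a b : V) (hb : b ≠ 0) (t : ℝ) (hxt : interp a b t ≠ 0) :
    HasDerivAt (fun s => ⟪interp a b s, b⟫ / (‖interp a b s‖ * ‖b‖))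
      ((‖b‖ ^ 2 * ‖interp a b t‖ ^ 2 - ⟪interp a b t, b⟫ ^ 2) /
        (‖interp a b t‖ ^ 3 * ‖b‖)) t := by
  set x := interp a b with hxdef
  have hx' : HasDerivAt x (b - x t) t := interp_hasDerivAt a b t
  have hg : ‖x t‖ ≠ 0 := norm_ne_zero_iff.mpr hxt
  have hgpos : (0:ℝ) < ‖x t‖ := norm_pos_iff.mpr hxt
  have hbpos : (0:ℝ) < ‖b‖ := norm_pos_iff.mpr hb
  -- derivative of the inner product
  have hf : HasDerivAt (fun s => ⟪x s, b⟫) (⟪b - x t, b⟫) t := by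
    have := hx'.inner ℝ (hasDerivAt_const t b)
    simpa using this
  -- derivative of the norm: ‖x s‖ = sqrt (‖x s‖ ^ 2)
  have hsq : HasDerivAt (fun s => ‖x s‖ ^ 2) (2 * ⟪x t, b - x t⟫) t := hx'.norm_sq
  have hsq0 : ‖x t‖ ^ 2 ≠ 0 := pow_ne_zero 2 hg
  have hnorm : HasDerivAt (fun s => ‖x s‖)
      ((2 * ⟪x t, b - x t⟫) / (2 * ‖x t‖)) t := by
    have := hsq.sqrt hsq0
    have heq : (fun s => Real.sqrt (‖x s‖ ^ 2)) = fun s => ‖x s‖ := by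
      funext s; exact Real.sqrt_sq (norm_nonneg _)
    rw [heq] at this
    simpa [Real.sqrt_sq (norm_nonneg (x t))] using this
  have hden : HasDerivAt (fun s => ‖x s‖ * ‖b‖)
      ((2 * ⟪x t, b - x t⟫) / (2 * ‖x t‖) * ‖b‖) t := hnorm.mul_const _
  have hdenne : ‖x t‖ * ‖b‖ ≠ 0 := mul_ne_zero hg (ne_of_gt hbpos)
  have hdiv := hf.div hden hdenne
  refine hdiv.congr_deriv ?_
  have hib : ⟪b - x t, b⟫ = ‖b‖ ^ 2 - ⟪x t, b⟫ := by
    rw [inner_sub_left, real_inner_self_eq_norm_sq]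
  have hix : ⟪x t, b - x t⟫ = ⟪x t, b⟫ - ‖x t‖ ^ 2 := by
    rw [inner_sub_right, real_inner_self_eq_norm_sq]
  rw [hib, hix]
  field_simp
  ring
end aux

/-- along `x(t) = e⁻ᵗ a + (1 - e⁻ᵗ) b` (with `b ≠ 0` and `x`
nonvanishing on `[t₀, t₁] ⊆ [0, ∞)`), the cosine `⟪x(t), b⟫ / (‖x(t)‖‖b‖)` is
monotone nondecreasing, with derivative
`(‖b‖²‖x(t)‖² - ⟪x(t), b⟫²) / (‖x(t)‖³‖b‖) ≥ 0`. -/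
theorem cosine_alignment_monotone {V : Type*} [NormedAddCommGroup V]
    [InnerProductSpace ℝ V]
    (a b : V) (hb : b ≠ 0) (t₀ t₁ : ℝ) (ht₀ : 0 ≤ t₀) (ht : t₀ ≤ t₁)
    (hx : ∀ t ∈ Set.Icc t₀ t₁, interp a b t ≠ 0) :
    MonotoneOn (fun t => ⟪interp a b t, b⟫ / (‖interp a b t‖ * ‖b‖))
      (Set.Icc t₀ t₁) ∧
    ∀ t ∈ Set.Icc t₀ t₁,
      HasDerivAt (fun s => ⟪interp a b s, b⟫ / (‖interp a b s‖ * ‖b‖))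
        ((‖b‖ ^ 2 * ‖interp a b t‖ ^ 2 - ⟪interp a b t, b⟫ ^ 2) /
          (‖interp a b t‖ ^ 3 * ‖b‖)) t ∧
      0 ≤ (‖b‖ ^ 2 * ‖interp a b t‖ ^ 2 - ⟪interp a b t, b⟫ ^ 2) /
          (‖interp a b t‖ ^ 3 * ‖b‖) := by
  have hderiv : ∀ t ∈ Set.Icc t₀ t₁,
      HasDerivAt (fun s => ⟪interp a b s, b⟫ / (‖interp a b s‖ * ‖b‖))
        ((‖b‖ ^ 2 * ‖interp a b t‖ ^ 2 - ⟪interp a b t, b⟫ ^ 2) /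
          (‖interp a b t‖ ^ 3 * ‖b‖)) t :=
    fun t htI => cos_hasDerivAt a b hb t (hx t htI)
  have hnonneg : ∀ t ∈ Set.Icc t₀ t₁,
      0 ≤ (‖b‖ ^ 2 * ‖interp a b t‖ ^ 2 - ⟪interp a b t, b⟫ ^ 2) /
          (‖interp a b t‖ ^ 3 * ‖b‖) := by
    intro t htI
    have hxne := hx t htI
    have hgpos : (0:ℝ) < ‖interp a b t‖ := norm_pos_iff.mpr hxne
    have hbpos : (0:ℝ) < ‖b‖ := norm_pos_iff.mpr hb
    apply div_nonneg
    · have hcs := abs_real_inner_le_norm (interp a b t) b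
      have : ⟪interp a b t, b⟫ ^ 2 ≤ (‖interp a b t‖ * ‖b‖) ^ 2 := by
        rw [← sq_abs]
        exact pow_le_pow_left₀ (abs_nonneg _) hcs 2
      nlinarith
    · positivity
  refine ⟨?_, fun t htI => ⟨hderiv t htI, hnonneg t htI⟩⟩
  apply monotoneOn_of_deriv_nonneg (convex_Icc t₀ t₁)
  · intro t htI
    exact ((hderiv t htI).continuousAt).continuousWithinAt
  · intro t htI
    exact ((hderiv t (interior_subset htI)).differentiableAt).differentiableWithinAt
  · intro t htI
    rw [(hderiv t (interior_subset htI)).deriv]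
    exact hnonneg t (interior_subset htI)
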